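/- Let Γ be a simplicial complex with vertex set [n], let t (resp. s) be the minimum (resp. maximum) dimension of a minimal nonface of Γ, and let r = dim Γ. Then Γ is chordal if and only if Γ is d-chordal for every d with t ≤ d ≤ min{r, s}. -/

import Mathlib

namespace ChordalPaper

/-- A simplicial complex on vertex set `Fin n`: a family of finsets closed under subsets. -/
def IsComplex {n : ℕ} (Γ : Set (Finset (Fin n))) : Prop :=
  ∀ F ∈ Γ, ∀ F' ⊆ F, F' ∈ Γ

/-- The `d`-closure `Δ_d(Γ)`: all subsets of size `≤ d`, together with all subsets
all of whose `(d+1)`-element subsets are faces of `Γ`. -/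
def dClosure {n : ℕ} (d : ℕ) (Γ : Set (Finset (Fin n))) : Set (Finset (Fin n)) :=
  {F | F.card ≤ d ∨ ∀ G ⊆ F, G.card = d + 1 → G ∈ Γ}

/-- The pure `(d-1)`-skeleton `⟨[n]⟩^{[d-1]}` of the full simplex: all subsets of size `≤ d`. -/
def fullSkel (n d : ℕ) : Set (Finset (Fin n)) := {F | F.card ≤ d}

/-- A facet: a maximal face. -/
def IsFacet {n : ℕ} (Γ : Set (Finset (Fin n))) (F : Finset (Fin n)) : Prop :=
  F ∈ Γ ∧ ∀ G ∈ Γ, F ⊆ G → G = F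

/-- A free face: a face contained in a unique facet. -/
def IsFreeFace {n : ℕ} (Γ : Set (Finset (Fin n))) (E : Finset (Fin n)) : Prop :=
  E ∈ Γ ∧ ∃! F, IsFacet Γ F ∧ E ⊆ F

/-- Collapse at `E`: remove all faces containing `E` (including `E` itself). -/
def collapseFace {n : ℕ} (Γ : Set (Finset (Fin n))) (E : Finset (Fin n)) :
    Set (Finset (Fin n)) := {F ∈ Γ | ¬ E ⊆ F}

/-- Successive collapses along a list of faces. -/
def collapseList {n : ℕ} (Γ : Set (Finset (Fin n))) :
    List (Finset (Fin n)) → Set (Finset (Fin n))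
  | [] => Γ
  | E :: L => collapseList (collapseFace Γ E) L

/-- A free sequence: each face is free in the complex obtained by collapsing the previous ones. -/
def IsFreeSeq {n : ℕ} (Γ : Set (Finset (Fin n))) : List (Finset (Fin n)) → Prop
  | [] => True
  | E :: L => IsFreeFace Γ E ∧ IsFreeSeq (collapseFace Γ E) L

/-- `d`-collapsibility: a sequence of elementary `d`-collapsings (at free faces of
dimension `< d`, i.e. cardinality `≤ d`) reduces `Γ` to the void complex. -/
def Collapsible {n : ℕ} (d : ℕ) (Γ : Set (Finset (Fin n))) : Prop :=
  ∃ L : List (Finset (Fin n)),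
    IsFreeSeq Γ L ∧ (∀ E ∈ L, E.card ≤ d) ∧ collapseList Γ L = ∅

/-- Simplicial deletion `Γ∖E`: remove all faces strictly containing `E` (keeping `E`). -/
def srDel {n : ℕ} (Γ : Set (Finset (Fin n))) (E : Finset (Fin n)) :
    Set (Finset (Fin n)) := {F ∈ Γ | ¬ E ⊂ F}

/-- Successive simplicial deletions along a list of faces. -/
def srDelList {n : ℕ} (Γ : Set (Finset (Fin n))) :
    List (Finset (Fin n)) → Set (Finset (Fin n))
  | [] => Γ
  | E :: L => srDelList (srDel Γ E) L

/-- A simplicial order for a `d`-closure on `Fin n`: a sequence of non-facet free faces of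
cardinality `d` whose successive simplicial deletions reduce the complex to the pure
`(d-1)`-skeleton of the full simplex. -/
def IsSimpOrder {n : ℕ} (d : ℕ) (Γ : Set (Finset (Fin n))) :
    List (Finset (Fin n)) → Prop
  | [] => Γ = fullSkel n d
  | E :: L => E.card = d ∧ IsFreeFace Γ E ∧ ¬ IsFacet Γ E ∧ IsSimpOrder d (srDel Γ E) L

/-- `Γ` is `d`-chordal: its `d`-closure equals the pure `(d-1)`-skeleton of the full
simplex or admits a simplicial order. -/
def DChordal {n : ℕ} (d : ℕ) (Γ : Set (Finset (Fin n))) : Prop :=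
  ∃ L, IsSimpOrder d (dClosure d Γ) L

/-- A minimal nonface of `Γ`. -/
def IsMinNonface {n : ℕ} (Γ : Set (Finset (Fin n))) (F : Finset (Fin n)) : Prop :=
  F ∉ Γ ∧ ∀ G ⊂ F, G ∈ Γ

variable {n : ℕ}

lemma srDelList_eq (Γ : Set (Finset (Fin n))) (L : List (Finset (Fin n))) :
    srDelList Γ L = {F ∈ Γ | ∀ E ∈ L, ¬ E ⊂ F} := by
  induction L generalizing Γ with
  | nil => simp [srDelList]
  | cons E L ih =>
      rw [srDelList, ih]
      ext F
      simp only [srDel, Set.mem_setOf_eq, List.mem_cons]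
      constructor
      · rintro ⟨⟨h1, h2⟩, h3⟩
        exact ⟨h1, fun x hx => hx.elim (fun h => h ▸ h2) (h3 x)⟩
      · rintro ⟨h1, h2⟩
        exact ⟨⟨h1, h2 E (Or.inl rfl)⟩, fun x hx => h2 x (Or.inr hx)⟩

lemma exists_facet (Δ : Set (Finset (Fin n))) {G : Finset (Fin n)} (hG : G ∈ Δ) :
    ∃ H, IsFacet Δ H ∧ G ⊆ H := by
  obtain ⟨H, hH, hmax⟩ := Set.Finite.exists_maximalFor (fun F : Finset (Fin n) => F.card)
    {F ∈ Δ | G ⊆ F} (Set.toFinite _) ⟨G, hG, subset_rfl⟩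
  refine ⟨H, ⟨hH.1, fun K hK hsub => ?_⟩, hH.2⟩
  have hc := hmax ⟨hK, hH.2.trans hsub⟩ (Finset.card_le_card hsub)
  exact (Finset.eq_of_subset_of_card_le hsub hc).symm

lemma isSimpOrder_of {d : ℕ} :
    ∀ (L : List (Finset (Fin n))) (Δ : Set (Finset (Fin n))),
      (∀ L₁ D L₂, L = L₁ ++ D :: L₂ →
        D.card = d ∧ IsFreeFace (srDelList Δ L₁) D ∧ ¬ IsFacet (srDelList Δ L₁) D) →
      srDelList Δ L = fullSkel n d → IsSimpOrder d Δ L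
  | [], Δ, _, hfin => hfin
  | E :: L, Δ, h, hfin => by
      obtain ⟨hc, hfree, hnf⟩ := h [] E L rfl
      refine ⟨hc, hfree, hnf, ?_⟩
      exact isSimpOrder_of L (srDel Δ E) (fun L₁ D L₂ hL => h (E :: L₁) D L₂ (by simp [hL])) hfin

lemma isSimpOrder_get {d : ℕ} :
    ∀ (L : List (Finset (Fin n))) (Δ : Set (Finset (Fin n))), IsSimpOrder d Δ L →
      srDelList Δ L = fullSkel n d ∧
      ∀ i < L.length, (L.getD i ∅).card = d ∧
        IsFreeFace (srDelList Δ (L.take i)) (L.getD i ∅) ∧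
        ¬ IsFacet (srDelList Δ (L.take i)) (L.getD i ∅)
  | [], Δ, h => ⟨h, by simp⟩
  | E :: L, Δ, h => by
      obtain ⟨hc, hfree, hnf, hrest⟩ := h
      obtain ⟨hfin, hind⟩ := isSimpOrder_get L (srDel Δ E) hrest
      refine ⟨hfin, fun i hi => ?_⟩
      match i with
      | 0 => exact ⟨hc, hfree, hnf⟩
      | (j+1) => exact hind j (by simpa using hi)

lemma mem_take_iff (L : List (Finset (Fin n))) (i : ℕ) (x : Finset (Fin n)) :
    x ∈ L.take i ↔ ∃ j, j < i ∧ j < L.length ∧ L.getD j ∅ = x := by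
  rw [List.mem_iff_getElem]
  constructor
  · rintro ⟨j, hj, rfl⟩
    have hj' : j < i ∧ j < L.length := by
      simpa [List.length_take, Nat.lt_min] using hj
    exact ⟨j, hj'.1, hj'.2, by rw [List.getElem_take, List.getD_eq_getElem?_getD,
      List.getElem?_eq_getElem hj'.2]; simp⟩
  · rintro ⟨j, hji, hjL, rfl⟩
    refine ⟨j, by simpa [List.length_take, Nat.lt_min] using And.intro hji hjL, ?_⟩
    rw [List.getElem_take, List.getD_eq_getElem?_getD, List.getElem?_eq_getElem hjL]; simp

lemma mem_list_iff (L : List (Finset (Fin n))) (x : Finset (Fin n)) :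
    x ∈ L ↔ ∃ j, j < L.length ∧ L.getD j ∅ = x := by
  rw [List.mem_iff_getElem]
  constructor
  · rintro ⟨j, hj, rfl⟩
    exact ⟨j, hj, by rw [List.getD_eq_getElem?_getD, List.getElem?_eq_getElem hj]; simp⟩
  · rintro ⟨j, hj, rfl⟩
    exact ⟨j, hj, by rw [List.getD_eq_getElem?_getD, List.getElem?_eq_getElem hj]; simp⟩


lemma master {d : ℕ} (Δ : Set (Finset (Fin n))) (𝒟 : Finset (Finset (Fin n)))
    (π : Finset (Fin n) → ℕ)
    (HC : ∀ D ∈ 𝒟, ∀ S : Set (Finset (Fin n)),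
      (∀ D' ∈ 𝒟, π D' < π D → D' ∈ S) →
      (∀ D' ∈ S, D' ∈ 𝒟 ∧ π D' ≤ π D ∧ D' ≠ D) →
      D.card = d ∧ IsFreeFace {G ∈ Δ | ∀ D' ∈ S, ¬ D' ⊂ G} D ∧
        ¬ IsFacet {G ∈ Δ | ∀ D' ∈ S, ¬ D' ⊂ G} D)
    (HF : {G ∈ Δ | ∀ D' ∈ 𝒟, ¬ D' ⊂ G} = fullSkel n d) :
    ∃ L, IsSimpOrder d Δ L := by
  classical
  set N := 𝒟.sup π + 1 with hNdef
  have hN : ∀ D ∈ 𝒟, π D < N := fun D hD => Nat.lt_succ_of_le (Finset.le_sup hD)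
  set L : List (Finset (Fin n)) :=
    (List.range N).flatMap (fun w => (𝒟.filter (fun D => π D = w)).toList) with hL
  have memL : ∀ x, x ∈ L ↔ x ∈ 𝒟 := by
    intro x
    simp only [hL, List.mem_flatMap, List.mem_range, Finset.mem_toList, Finset.mem_filter]
    constructor
    · rintro ⟨w, _, hx, _⟩; exact hx
    · intro hx; exact ⟨π x, hN x hx, hx, rfl⟩
  have hπmem : ∀ w, ∀ x ∈ (𝒟.filter (fun D => π D = w)).toList, π x = w := by
    intro w x hx
    simpa using (Finset.mem_filter.mp (Finset.mem_toList.mp hx)).2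
  have pw : List.Pairwise (fun a b => π a ≤ π b) L := by
    rw [hL, List.pairwise_flatMap]
    constructor
    · intro w _
      exact List.pairwise_of_forall_mem_list (fun a ha b hb => by
        rw [hπmem w a ha, hπmem w b hb])
    · exact (List.pairwise_lt_range (n := N)).imp (by
        intro w w' hww' x hx y hy
        rw [hπmem w x hx, hπmem w' y hy]; exact le_of_lt hww')
  have nd : L.Nodup := by
    rw [hL, List.nodup_flatMap]
    refine ⟨fun w _ => Finset.nodup_toList _, ?_⟩
    exact (List.pairwise_lt_range (n := N)).imp (by
      intro w w' hww' x hx hy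
      have := hπmem w x hx
      have := hπmem w' x hy
      omega)
  refine ⟨L, isSimpOrder_of L Δ ?_ ?_⟩
  · intro L₁ D L₂ hsplit
    have hDL : D ∈ L := by rw [hsplit]; exact List.mem_append_right _ (List.mem_cons_self)
    have hD : D ∈ 𝒟 := (memL D).1 hDL
    rw [hsplit] at pw nd
    obtain ⟨pw1, pw2, pw3⟩ := List.pairwise_append.mp pw
    have hDnotL1 : D ∉ L₁ := by
      intro hmem
      exact (List.disjoint_of_nodup_append nd) hmem (List.mem_cons_self)
    have hsub : ∀ x ∈ {y | y ∈ L₁}, x ∈ 𝒟 ∧ π x ≤ π D ∧ x ≠ D := by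
      intro x hx
      refine ⟨(memL x).1 (hsplit ▸ List.mem_append_left _ hx), pw3 x hx D (List.mem_cons_self),
        fun h => hDnotL1 (h ▸ hx)⟩
    have hlow : ∀ x ∈ 𝒟, π x < π D → x ∈ {y | y ∈ L₁} := by
      intro x hx hπx
      have : x ∈ L := (memL x).2 hx
      rw [hsplit] at this
      rcases List.mem_append.mp this with h | h
      · exact h
      · rcases List.mem_cons.mp h with rfl | h
        · omega
        · have := (List.pairwise_cons.mp pw2).1 x h
          omega
    have := HC D hD {y | y ∈ L₁} hlow hsub
    rw [srDelList_eq]; exact this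
  · rw [srDelList_eq, ← HF]
    ext G
    simp only [Set.mem_setOf_eq]
    constructor
    · rintro ⟨h1, h2⟩; exact ⟨h1, fun x hx => h2 x ((memL x).2 hx)⟩
    · rintro ⟨h1, h2⟩; exact ⟨h1, fun x hx => h2 x ((memL x).1 hx)⟩


lemma geom {d k : ℕ} (Δ : Set (Finset (Fin n))) (hΔ : IsComplex Δ)
    (hskel : fullSkel n d ⊆ Δ) (E F : ℕ → Finset (Fin n))
    (h3 : ∀ i < k, E i ⊂ F i ∧ F i ∈ Δ ∧ (E i).card < d)
    (h4 : ∀ i < k, ∀ G ∈ Δ, d + 1 ≤ G.card → E i ⊂ G → (∀ j < i, ¬ E j ⊂ G) → G ⊆ F i)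
    (h5 : ∀ G ∈ Δ, d + 1 ≤ G.card → ∃ i < k, E i ⊂ G)
    (h6 : ∀ i < k, ∀ j < i, ¬ E j ⊂ F i) :
    ∃ L, IsSimpOrder d Δ L := by
  classical
  rcases Nat.eq_zero_or_pos n with hn | hn
  · subst hn
    refine ⟨[], ?_⟩
    show Δ = fullSkel 0 d
    refine Set.Subset.antisymm (fun G _ => ?_) hskel
    show G.card ≤ d
    have : G = ∅ := Finset.eq_empty_of_isEmpty G
    simp [this]
  have hvne : ∀ i < k, (F i \ E i).Nonempty := fun i hi =>
    Finset.sdiff_nonempty.mpr (h3 i hi).1.not_subset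
  set v : ℕ → Fin n := fun i => if h : (F i \ E i).Nonempty then (F i \ E i).max' h
    else ⟨0, hn⟩ with hvdef
  have hv : ∀ i < k, v i ∈ F i \ E i ∧ ∀ x ∈ F i \ E i, x ≤ v i := by
    intro i hi
    rw [hvdef]; simp only [dif_pos (hvne i hi)]
    exact ⟨Finset.max'_mem _ _, fun x hx => Finset.le_max' _ x hx⟩
  set Q : Finset (Fin n) → ℕ → Prop :=
    fun D j => j < k ∧ E j ⊆ D ∧ D ⊆ (F j).erase (v j) with hQdef
  set ι : Finset (Fin n) → ℕ := fun D => sInf {j | Q D j} with hιdef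
  set wt : Finset (Fin n) → ℕ → ℕ := fun D j => (D \ E j).sup (fun a => (a : ℕ) + 1) with hwtdef
  set π : Finset (Fin n) → ℕ := fun D => ι D * (n + 1) + wt D (ι D) with hπdef
  set 𝒟 : Finset (Finset (Fin n)) :=
    Finset.univ.filter (fun D => D.card = d ∧ ∃ j, Q D j) with h𝒟def
  have hπval : ∀ D0, π D0 = ι D0 * (n + 1) + wt D0 (ι D0) := fun _ => rfl
  have hwtval : ∀ D0 j, wt D0 j = (D0 \ E j).sup (fun a => (a : ℕ) + 1) := fun _ _ => rfl
  have hwtle : ∀ D0 j, wt D0 j ≤ n := fun D0 j => Finset.sup_le (fun a _ => a.isLt)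
  have hπlt : ∀ D0 D1 : Finset (Fin n), ι D0 < ι D1 → π D0 < π D1 := by
    intro D0 D1 h
    have key : (ι D0 + 1) * (n + 1) ≤ ι D1 * (n + 1) := Nat.mul_le_mul_right _ h
    have h2 := hwtle D0 (ι D0)
    rw [Nat.succ_mul] at key
    rw [hπval, hπval]
    omega
  have h𝒟mem : ∀ D0, D0 ∈ 𝒟 ↔ D0.card = d ∧ ∃ j, Q D0 j := by
    intro D0; rw [h𝒟def]; simp [Finset.mem_filter]
  have hQι : ∀ D0 ∈ 𝒟, Q D0 (ι D0) := by
    intro D0 hD0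
    obtain ⟨-, j, hQj⟩ := (h𝒟mem D0).mp hD0
    exact Nat.sInf_mem (⟨j, hQj⟩ : Set.Nonempty {j | Q D0 j})
  have hιle : ∀ D0 j, Q D0 j → ι D0 ≤ j := fun D0 j hQ => Nat.sInf_le hQ
  -- construction of a deletable d-set inside a big face
  have getD'' : ∀ j, j < k → ∀ G : Finset (Fin n), G ⊆ F j → E j ⊂ G → d + 1 ≤ G.card →
      ∃ D'', (Q D'' j ∧ D''.card = d) ∧ D'' ⊂ G := by
    intro j hj G hGF hEG hGc
    have hvj := hv j hj
    have hEGe : E j ⊆ G.erase (v j) := by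
      rw [Finset.subset_erase]
      exact ⟨hEG.subset, fun h => (Finset.mem_sdiff.mp hvj.1).2 h⟩
    have hc1 : (E j).card ≤ d := le_of_lt (h3 j hj).2.2
    have hc2 : d ≤ (G.erase (v j)).card := by
      rcases em (v j ∈ G) with h | h
      · rw [Finset.card_erase_of_mem h]; omega
      · rw [Finset.erase_eq_of_notMem h]; omega
    obtain ⟨D'', hD1, hD2, hD3⟩ := Finset.exists_subsuperset_card_eq hEGe hc1 hc2
    refine ⟨D'', ⟨⟨hj, hD1, hD2.trans (Finset.erase_subset_erase _ hGF)⟩, hD3⟩, ?_⟩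
    have hsub : D'' ⊆ G := hD2.trans (Finset.erase_subset _ _)
    refine hsub.ssubset_of_ne ?_
    intro h
    rw [h] at hD3
    omega
  -- least interval index of a big face
  have least : ∀ G ∈ Δ, d + 1 ≤ G.card →
      ∃ j, (j < k ∧ E j ⊂ G) ∧ (∀ j' < j, ¬ E j' ⊂ G) ∧ G ⊆ F j := by
    intro G hG hGc
    obtain ⟨i0, hi0, hEi0⟩ := h5 G hG hGc
    have hTne : Set.Nonempty {j | j < k ∧ E j ⊂ G} := ⟨i0, hi0, hEi0⟩
    have hjT := Nat.sInf_mem hTne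
    set j := sInf {j | j < k ∧ E j ⊂ G}
    have hmin : ∀ j' < j, ¬ E j' ⊂ G := by
      intro j' hj' hE'
      have hj'T : j' ∈ {j | j < k ∧ E j ⊂ G} := ⟨lt_trans hj' hjT.1, hE'⟩
      exact absurd (Nat.sInf_le hj'T) (by omega)
    exact ⟨j, hjT, hmin, h4 j hjT.1 G hG hGc hjT.2 hmin⟩
  have HC : ∀ D ∈ 𝒟, ∀ S : Set (Finset (Fin n)),
      (∀ D' ∈ 𝒟, π D' < π D → D' ∈ S) →
      (∀ D' ∈ S, D' ∈ 𝒟 ∧ π D' ≤ π D ∧ D' ≠ D) →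
      D.card = d ∧ IsFreeFace {G ∈ Δ | ∀ D' ∈ S, ¬ D' ⊂ G} D ∧
        ¬ IsFacet {G ∈ Δ | ∀ D' ∈ S, ¬ D' ⊂ G} D := by
    intro D hD S hSlow hSup
    obtain ⟨hcard, -⟩ := (h𝒟mem D).mp hD
    have hQD := hQι D hD
    set i := ι D with hidef
    obtain ⟨hik, hED, hDFe⟩ := hQD
    have hdpos : 1 ≤ d := by have := (h3 i hik).2.2; omega
    have hDF : D ⊆ F i := hDFe.trans (Finset.erase_subset _ _)
    have hvD : v i ∉ D := fun h => (Finset.mem_erase.mp (hDFe h)).1 rfl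
    have hDne : (D \ E i).Nonempty := by
      rw [Finset.sdiff_nonempty]
      intro hsub
      have := Finset.card_le_card hsub
      have := (h3 i hik).2.2
      omega
    set m := (D \ E i).max' hDne with hmdef
    have hm : m ∈ D \ E i := Finset.max'_mem _ _
    have hmD : m ∈ D := (Finset.mem_sdiff.mp hm).1
    have hmE : m ∉ E i := (Finset.mem_sdiff.mp hm).2
    have hmv : m < v i := by
      refine lt_of_le_of_ne ((hv i hik).2 m (Finset.mem_sdiff.mpr ⟨hDF hmD, hmE⟩)) ?_
      intro h
      exact hvD (h ▸ hmD)
    have hwtD : wt D i = (m : ℕ) + 1 := by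
      rw [hwtval]
      refine le_antisymm (Finset.sup_le fun a ha => ?_) (Finset.le_sup (f := fun a : Fin n => (a:ℕ)+1) hm)
      exact Nat.succ_le_succ (Fin.le_def.mp (Finset.le_max' _ a ha))
    set Fac := D ∪ (F i \ E i).filter (fun y => m < y) with hFacdef
    have hFacF : Fac ⊆ F i :=
      Finset.union_subset hDF ((Finset.filter_subset _ _).trans (Finset.sdiff_subset))
    have hFacΔ : Fac ∈ Δ := hΔ (F i) (h3 i hik).2.1 Fac hFacF
    have hvFac : v i ∈ Fac :=
      Finset.mem_union_right _ (Finset.mem_filter.mpr ⟨(hv i hik).1, hmv⟩)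
    have hDFac : D ⊆ Fac := Finset.subset_union_left
    have hFaccard : d + 1 ≤ Fac.card := by
      have h1 : insert (v i) D ⊆ Fac := Finset.insert_subset hvFac hDFac
      have h2 := Finset.card_le_card h1
      rw [Finset.card_insert_of_notMem hvD, hcard] at h2
      exact h2
    have hFacne : Fac ≠ D := fun h => hvD (h ▸ hvFac)
    -- every alive face containing D is inside Fac
    have aliveSub : ∀ G, G ∈ Δ → (∀ D' ∈ S, ¬ D' ⊂ G) → D ⊆ G → G ⊆ Fac := by
      intro G hGΔ hGalive hDG
      rcases eq_or_ne G D with rfl | hne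
      · exact hDFac
      have hDGs : D ⊂ G := hDG.ssubset_of_ne (Ne.symm hne)
      have hGc : d + 1 ≤ G.card := by
        have := Finset.card_lt_card hDGs
        omega
      obtain ⟨j, ⟨hjk, hEjG⟩, hmin, hGF⟩ := least G hGΔ hGc
      have hEiG : E i ⊂ G := lt_of_le_of_lt hED hDGs
      have hji : j ≤ i := le_of_not_gt fun h => hmin i h hEiG
      rcases lt_or_eq_of_le hji with hlt | heq
      · obtain ⟨D'', ⟨hQ'', hc''⟩, hssub⟩ := getD'' j hjk G hGF hEjG hGc
        have hD''𝒟 : D'' ∈ 𝒟 := (h𝒟mem D'').mpr ⟨hc'', j, hQ''⟩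
        have hπ'' : π D'' < π D := hπlt _ _ (lt_of_le_of_lt (hιle D'' j hQ'') hlt)
        exact (hGalive D'' (hSlow D'' hD''𝒟 hπ'') hssub).elim
      · subst heq
        intro x hxG
        by_contra hxFac
        have hxD : x ∉ D := fun h => hxFac (hDFac h)
        have hxE : x ∉ E i := fun h => hxD (hED h)
        have hxF : x ∈ F i := hGF hxG
        have hxm : ¬ m < x := fun h =>
          hxFac (Finset.mem_union_right _
            (Finset.mem_filter.mpr ⟨Finset.mem_sdiff.mpr ⟨hxF, hxE⟩, h⟩))
        have hxm' : x < m := lt_of_le_of_ne (not_lt.mp hxm) (fun h => hxD (h ▸ hmD))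
        have hxv : x ≠ v i := ne_of_lt (hxm'.trans hmv)
        set D'' := insert x (D.erase m) with hD''def
        have hxDe : x ∉ D.erase m := fun h => hxD (Finset.mem_of_mem_erase h)
        have hc'' : D''.card = d := by
          rw [hD''def, Finset.card_insert_of_notMem hxDe, Finset.card_erase_of_mem hmD, hcard]
          omega
        have hQ'' : Q D'' i := by
          refine ⟨hik, ?_, ?_⟩
          · intro a ha
            exact Finset.mem_insert_of_mem
              (Finset.mem_erase.mpr ⟨fun h => hmE (h ▸ ha), hED ha⟩)
          · rw [hD''def]
            exact Finset.insert_subset (Finset.mem_erase.mpr ⟨hxv, hxF⟩)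
              ((Finset.erase_subset _ _).trans hDFe)
        have hD''𝒟 : D'' ∈ 𝒟 := (h𝒟mem D'').mpr ⟨hc'', i, hQ''⟩
        have hπ'' : π D'' < π D := by
          have hle : ι D'' ≤ i := hιle D'' i hQ''
          rcases lt_or_eq_of_le hle with hlt2 | heq2
          · exact hπlt _ _ hlt2
          · have hwt'' : wt D'' i ≤ (m : ℕ) := by
              rw [hwtval]
              refine Finset.sup_le fun a ha => ?_
              obtain ⟨haD'', haE⟩ := Finset.mem_sdiff.mp ha
              rcases Finset.mem_insert.mp haD'' with rfl | h
              · exact Nat.succ_le_of_lt (Fin.lt_def.mp hxm')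
              · obtain ⟨hne2, haD⟩ := Finset.mem_erase.mp h
                have : a ≤ m := Finset.le_max' _ a (Finset.mem_sdiff.mpr ⟨haD, haE⟩)
                have : a < m := lt_of_le_of_ne this hne2
                exact Nat.succ_le_of_lt (Fin.lt_def.mp this)
            rw [hπval, hπval, heq2, ← hidef, hwtD]
            omega
        have hssub : D'' ⊂ G := by
          have hsub : D'' ⊆ G := by
            rw [hD''def]
            exact Finset.insert_subset hxG ((Finset.erase_subset _ _).trans hDG)
          refine hsub.ssubset_of_ne ?_
          intro h
          rw [h] at hc''
          omega
        exact hGalive D'' (hSlow D'' hD''𝒟 hπ'') hssub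
    -- Fac is alive
    have hFacAlive : ∀ D' ∈ S, ¬ D' ⊂ Fac := by
      intro D' hD'S hss
      obtain ⟨hD'𝒟, hπle, hne'⟩ := hSup D' hD'S
      have hQ' := hQι D' hD'𝒟
      have hcard' : D'.card = d := ((h𝒟mem D').mp hD'𝒟).1
      obtain ⟨hj'k, hE'D', hD'Fe⟩ := hQ'
      rcases lt_trichotomy (ι D') i with hlt | heq | hgt
      · refine h6 i hik (ι D') hlt ?_
        have h1 : E (ι D') ⊆ F i := (hE'D'.trans hss.subset).trans hFacF
        refine h1.ssubset_of_ne ?_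
        intro h
        have h2 := Finset.card_le_card (h ▸ hFacF)
        have := (h3 (ι D') hj'k).2.2
        omega
      · have hD'Fac : D' ⊆ Fac := hss.subset
        rw [heq] at hE'D'
        have hy : ∃ y ∈ D' \ E i, m < y := by
          by_contra hcon
          push_neg at hcon
          have hsub2 : D' \ E i ⊆ D \ E i := by
            intro a ha
            obtain ⟨haD', haE⟩ := Finset.mem_sdiff.mp ha
            rcases Finset.mem_union.mp (hD'Fac haD') with h | h
            · exact Finset.mem_sdiff.mpr ⟨h, haE⟩
            · exact absurd (Finset.mem_filter.mp h).2 (not_lt.mpr (hcon a ha))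
          have hcards : (D \ E i).card ≤ (D' \ E i).card := by
            rw [Finset.card_sdiff_of_subset hE'D', Finset.card_sdiff_of_subset hED, hcard, hcard']
          have hEq : D' \ E i = D \ E i := Finset.eq_of_subset_of_card_le hsub2 hcards
          apply hne'
          calc D' = E i ∪ (D' \ E i) := (Finset.union_sdiff_of_subset hE'D').symm
          _ = E i ∪ (D \ E i) := by rw [hEq]
          _ = D := Finset.union_sdiff_of_subset hED
        obtain ⟨y, hyD', hym⟩ := hy
        have hwt' : (m : ℕ) + 2 ≤ wt D' i := by
          have h1 : (m : ℕ) + 2 ≤ (y : ℕ) + 1 := Nat.succ_le_succ (Nat.succ_le_of_lt (Fin.lt_def.mp hym))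
          rw [hwtval]
          exact le_trans h1 (Finset.le_sup (f := fun a : Fin n => (a:ℕ)+1) hyD')
        rw [hπval, hπval, heq, ← hidef, hwtD] at hπle
        omega
      · exact absurd hπle (not_le.mpr (hπlt D D' hgt))
    have hDC : D ∈ {G ∈ Δ | ∀ D' ∈ S, ¬ D' ⊂ G} := by
      refine ⟨hskel (le_of_eq hcard), fun D' hD'S hss => ?_⟩
      have hcard' : D'.card = d := ((h𝒟mem D').mp (hSup D' hD'S).1).1
      have := Finset.card_lt_card hss
      omega
    have hFacC : Fac ∈ {G ∈ Δ | ∀ D' ∈ S, ¬ D' ⊂ G} := ⟨hFacΔ, hFacAlive⟩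
    have hFacFacet : IsFacet {G ∈ Δ | ∀ D' ∈ S, ¬ D' ⊂ G} Fac := by
      refine ⟨hFacC, fun G hG hsub => ?_⟩
      exact Finset.Subset.antisymm (aliveSub G hG.1 hG.2 (hDFac.trans hsub)) hsub
    refine ⟨hcard, ⟨hDC, Fac, ⟨hFacFacet, hDFac⟩, ?_⟩, ?_⟩
    · rintro y ⟨hyFacet, hDy⟩
      have hyFac : y ⊆ Fac := aliveSub y hyFacet.1.1 hyFacet.1.2 hDy
      exact (hyFacet.2 Fac hFacC hyFac).symm
    · rintro ⟨-, hmax⟩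
      exact hFacne (hmax Fac hFacC hDFac)
  have HF : {G ∈ Δ | ∀ D' ∈ 𝒟, ¬ D' ⊂ G} = fullSkel n d := by
    ext G
    constructor
    · rintro ⟨hGΔ, hal⟩
      show G.card ≤ d
      by_contra hc
      have hGc : d + 1 ≤ G.card := by omega
      obtain ⟨j, ⟨hjk, hEjG⟩, hmin, hGF⟩ := least G hGΔ hGc
      obtain ⟨D'', ⟨hQ'', hc''⟩, hssub⟩ := getD'' j hjk G hGF hEjG hGc
      exact hal D'' ((h𝒟mem D'').mpr ⟨hc'', j, hQ''⟩) hssub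
    · intro hG
      refine ⟨hskel hG, fun D' hD' hss => ?_⟩
      have hcard' : D'.card = d := ((h𝒟mem D').mp hD').1
      have h1 := Finset.card_lt_card hss
      have h2 : G.card ≤ d := hG
      omega
  exact master Δ 𝒟 π HC HF


lemma exists_minNonface (Γ : Set (Finset (Fin n))) (G : Finset (Fin n)) :
    G ∉ Γ → ∃ N, N ⊆ G ∧ IsMinNonface Γ N := by
  induction G using Finset.strongInductionOn with
  | _ G ih =>
    intro hG
    by_cases h : ∀ G' ⊂ G, G' ∈ Γ
    · exact ⟨G, subset_rfl, hG, h⟩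
    · push_neg at h
      obtain ⟨G', hG', hG'n⟩ := h
      obtain ⟨N, hN, hmin⟩ := ih G' hG' hG'n
      exact ⟨N, hN.trans hG'.subset, hmin⟩

lemma dClosure_eq_univ {d : ℕ} {Γ : Set (Finset (Fin n))}
    (h : ∀ G : Finset (Fin n), G.card = d + 1 → G ∈ Γ) :
    dClosure d Γ = Set.univ :=
  Set.eq_univ_of_forall (fun F => Or.inr (fun G _ hc => h G hc))

lemma dClosure_eq_skel {d : ℕ} {Γ : Set (Finset (Fin n))}
    (h : ∀ G : Finset (Fin n), G.card = d + 1 → G ∉ Γ) :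
    dClosure d Γ = fullSkel n d := by
  ext F
  constructor
  · rintro (hc | hall)
    · exact hc
    · show F.card ≤ d
      by_contra hc
      obtain ⟨G, hGF, hGc⟩ := Finset.exists_subset_card_eq (s := F) (n := d + 1) (by omega)
      exact h G hGc (hall G hGF hGc)
  · exact Or.inl

lemma dClosure_eq_union {d : ℕ} {Γ : Set (Finset (Fin n))} (hΓ : IsComplex Γ)
    (h : ∀ F : Finset (Fin n), F ∉ Γ → d + 1 ≤ F.card → ∃ G ⊆ F, G.card = d + 1 ∧ G ∉ Γ) :
    dClosure d Γ = Γ ∪ fullSkel n d := by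
  ext F
  constructor
  · rintro (hc | hall)
    · exact Or.inr hc
    · rcases le_or_gt F.card d with hc | hc
      · exact Or.inr hc
      · left
        by_contra hF
        obtain ⟨G, hGF, hGc, hGn⟩ := h F hF (by omega)
        exact hGn (hall G hGF hGc)
  · rintro (hF | hc)
    · exact Or.inr (fun G hGF _ => hΓ F hF G hGF)
    · exact Or.inl hc

lemma stepLemma {Γ : Set (Finset (Fin n))} (hΓ : IsComplex Γ) {s e : ℕ}
    (hsmax : ∀ F, IsMinNonface Γ F → F.card ≤ s + 1) (hse : s ≤ e)
    (h : DChordal e Γ) : DChordal (e + 1) Γ := by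
  classical
  have hnf : ∀ d', s ≤ d' → dClosure d' Γ = Γ ∪ fullSkel n d' := by
    intro d' hd'
    refine dClosure_eq_union hΓ ?_
    intro F hF hcF
    obtain ⟨N, hNF, hNmin⟩ := exists_minNonface Γ F hF
    have hNc : N.card ≤ d' + 1 := le_trans (hsmax N hNmin) (by omega)
    obtain ⟨G, hNG, hGF, hGc⟩ := Finset.exists_subsuperset_card_eq hNF hNc hcF
    exact ⟨G, hGF, hGc, fun hG => hNmin.1 (hΓ G hG N hNG)⟩
  obtain ⟨L, hL⟩ := h
  set Δ' := dClosure e Γ with hΔ'def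
  have hΔ'eq : Δ' = Γ ∪ fullSkel n e := hnf e hse
  have hΔeq : dClosure (e + 1) Γ = Γ ∪ fullSkel n (e + 1) := hnf (e + 1) (by omega)
  set Δ := Γ ∪ fullSkel n (e + 1) with hΔdef
  show ∃ L', IsSimpOrder (e + 1) (dClosure (e + 1) Γ) L'
  rw [hΔeq]
  obtain ⟨hfin, hidx⟩ := isSimpOrder_get L Δ' hL
  set k := L.length with hkdef
  set Efun : ℕ → Finset (Fin n) := fun i => L.getD i ∅ with hEdef
  have hΔc : IsComplex Δ := by
    rintro F (hF | hF) F' hF'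
    · exact Or.inl (hΓ F hF F' hF')
    · exact Or.inr (le_trans (Finset.card_le_card hF') hF)
  have hGΓ : ∀ G ∈ Δ, e + 2 ≤ G.card → G ∈ Γ := by
    rintro G (hG | hG) hc
    · exact hG
    · exact absurd hc (by have : G.card ≤ e + 1 := hG; omega)
  have hΓΔ' : Γ ⊆ Δ' := by rw [hΔ'eq]; exact Set.subset_union_left
  have hface : ∀ i, ∃ Fi, i < k →
      IsFacet (srDelList Δ' (L.take i)) Fi ∧ Efun i ⊆ Fi ∧
        ∀ y, IsFacet (srDelList Δ' (L.take i)) y → Efun i ⊆ y → y = Fi := by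
    intro i
    by_cases hi : i < k
    · obtain ⟨-, hfree, -⟩ := hidx i hi
      obtain ⟨Fi, ⟨hFi1, hFi2⟩, huniq⟩ := hfree.2
      exact ⟨Fi, fun _ => ⟨hFi1, hFi2, fun y h1 h2 => huniq y ⟨h1, h2⟩⟩⟩
    · exact ⟨∅, fun hh => absurd hh hi⟩
  choose Ffun hFfun using hface
  have hpre : ∀ i, srDelList Δ' (L.take i) =
      {H ∈ Δ' | ∀ j, j < i → j < k → ¬ Efun j ⊂ H} := by
    intro i
    rw [srDelList_eq]
    ext H
    simp only [Set.mem_setOf_eq, and_congr_right_iff]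
    intro _
    constructor
    · intro hall j hj1 hj2
      exact hall (Efun j) ((mem_take_iff L i (Efun j)).mpr ⟨j, hj1, hj2, rfl⟩)
    · intro hall x hx
      obtain ⟨j, hj1, hj2, rfl⟩ := (mem_take_iff L i x).mp hx
      exact hall j hj1 hj2
  have hskelΔ : fullSkel n (e + 1) ⊆ Δ := Set.subset_union_right
  refine geom Δ hΔc hskelΔ Efun Ffun (k := k) ?_ ?_ ?_ ?_
  · intro i hi
    obtain ⟨hFacet, hsubEF, huniq⟩ := hFfun i hi
    obtain ⟨hcardE, -, hnonfac⟩ := hidx i hi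
    refine ⟨hsubEF.ssubset_of_ne (fun heq => hnonfac ?_), ?_, ?_⟩
    · have heq' : L.getD i ∅ = Ffun i := heq
      rw [heq']
      exact hFacet
    · have h1 : Ffun i ∈ Δ' := by
        have := hFacet.1
        rw [hpre i] at this
        exact this.1
      rw [hΔ'eq] at h1
      rcases h1 with h1 | h1
      · exact Or.inl h1
      · exact Or.inr (by show (Ffun i).card ≤ e + 1; have : (Ffun i).card ≤ e := h1; omega)
    · show (Efun i).card < e + 1
      have hcardE' : (Efun i).card = e := hcardE
      omega
  · intro i hi G hGΔ hGc hEG hmin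
    obtain ⟨hFacet, hsubEF, huniq⟩ := hFfun i hi
    have hGΔ' : G ∈ srDelList Δ' (L.take i) := by
      rw [hpre i]
      exact ⟨hΓΔ' (hGΓ G hGΔ hGc), fun j hj1 _ => hmin j hj1⟩
    obtain ⟨H, hHfacet, hGH⟩ := exists_facet _ hGΔ'
    have hEH : Efun i ⊆ H := hEG.subset.trans hGH
    rw [← huniq H hHfacet hEH]
    exact hGH
  · intro G hGΔ hGc
    have hGΔ' : G ∈ Δ' := hΓΔ' (hGΓ G hGΔ hGc)
    have hGnf : G ∉ fullSkel n e := by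
      intro hc
      have : G.card ≤ e := hc
      omega
    rw [← hfin, srDelList_eq] at hGnf
    have : ¬ ∀ x ∈ L, ¬ x ⊂ G := fun hc => hGnf ⟨hGΔ', hc⟩
    push_neg at this
    obtain ⟨x, hxL, hxG⟩ := this
    obtain ⟨j, hj, rfl⟩ := (mem_list_iff L x).mp hxL
    exact ⟨j, hj, hxG⟩
  · intro i hi j hj
    obtain ⟨hFacet, -, -⟩ := hFfun i hi
    have := hFacet.1
    rw [hpre i] at this
    exact this.2 j hj (lt_trans hj hi)

end ChordalPaper

open ChordalPaper in
/-- with `t` (resp. `s`) the minimum (resp. maximum) dimension of a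
minimal nonface of `Γ` and `r = dim Γ`, the complex `Γ` is chordal iff it is
`d`-chordal for all `t ≤ d ≤ min r s`. (Dimension of a finset is its cardinality
minus one.) -/
theorem stmt11 (n : ℕ) (Γ : Set (Finset (Fin n))) (hΓ : IsComplex Γ)
    (hvert : ∀ i : Fin n, ({i} : Finset (Fin n)) ∈ Γ)
    (t s r : ℕ)
    (ht : (∃ F, IsMinNonface Γ F ∧ F.card = t + 1) ∧
      ∀ F, IsMinNonface Γ F → t + 1 ≤ F.card)
    (hs : (∃ F, IsMinNonface Γ F ∧ F.card = s + 1) ∧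
      ∀ F, IsMinNonface Γ F → F.card ≤ s + 1)
    (hr : (∃ F ∈ Γ, F.card = r + 1) ∧ ∀ F ∈ Γ, F.card ≤ r + 1) :
    (∀ d, 1 ≤ d → DChordal d Γ) ↔ (∀ d, t ≤ d → d ≤ min r s → DChordal d Γ) := by
  classical
  obtain ⟨⟨Ft, hFt, hFtc⟩, htmin⟩ := ht
  obtain ⟨⟨Fs, hFs, hFsc⟩, hsmax⟩ := hs
  have ht1 : 1 ≤ t := by
    by_contra hcon
    have ht0 : t = 0 := by omega
    rw [ht0] at hFtc
    obtain ⟨i, hi⟩ := Finset.card_eq_one.mp hFtc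
    exact hFt.1 (hi ▸ hvert i)
  have hts : t ≤ s := by have := htmin Fs hFs; omega
  constructor
  · intro h d hd1 _
    exact h d (le_trans ht1 hd1)
  · intro h d hd1
    rcases lt_or_ge r d with hdr | hdr
    · -- d > r : the d-closure is the skeleton
      refine ⟨[], ?_⟩
      show dClosure d Γ = fullSkel n d
      refine dClosure_eq_skel ?_
      intro G hGc hGΓ
      have := hr.2 G hGΓ
      omega
    rcases lt_or_ge d t with hdt | hdt
    · -- d < t : the d-closure is the full complex
      have hn : 0 < n := by
        have hne : Ft.Nonempty := Finset.card_pos.mp (by omega)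
        obtain ⟨x, -⟩ := hne
        exact x.pos
      have huniv : dClosure d Γ = Set.univ := by
        refine dClosure_eq_univ ?_
        intro G hGc
        by_contra hGn
        obtain ⟨N, hNG, hNmin⟩ := exists_minNonface Γ G hGn
        have h1 := htmin N hNmin
        have h2 := Finset.card_le_card hNG
        omega
      show ∃ L, IsSimpOrder d (dClosure d Γ) L
      rw [huniv]
      haveI : Nonempty (Fin n) := ⟨⟨0, hn⟩⟩
      refine geom Set.univ (fun _ _ _ _ => trivial) (fun _ _ => trivial)
        (fun _ => ∅) (fun _ => Finset.univ) (k := 1) ?_ ?_ ?_ ?_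
      · intro i _
        refine ⟨Finset.empty_ssubset.mpr Finset.univ_nonempty, trivial, ?_⟩
        simp; omega
      · intro i _ G _ _ _ _
        exact Finset.subset_univ G
      · intro G _ hGc
        refine ⟨0, Nat.one_pos, Finset.empty_ssubset.mpr (Finset.card_pos.mp (by omega))⟩
      · intro i hi j hj
        omega
    rcases le_or_gt d s with hds | hsd
    · exact h d hdt (le_min hdr hds)
    · -- s < d ≤ r : induct up from s using the step lemma
      have key : ∀ m, DChordal (s + 1 + m) Γ := by
        intro m
        induction m with
        | zero =>
          have hbase : DChordal s Γ := h s hts (le_min (by omega) le_rfl)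
          exact stepLemma hΓ hsmax (e := s) le_rfl hbase
        | succ m ih =>
          exact stepLemma hΓ hsmax (e := s + 1 + m) (by omega) ih
      have hd : d = s + 1 + (d - s - 1) := by omega
      rw [hd]
      exact key _
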